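/- Let R be a noetherian commutative ring satisfying conditions (G₀) and (S₂), and let I, J be ideals of R. If I·R_𝔯 ⊆ J·R_𝔯 for every prime ideal 𝔯 of R with ht(𝔯) ≤ 1, then I** ⊆ J** (as ideals of R under the canonical identification). -/

import Mathlib

section Defs2
variable (R : Type*) [CommRing R]

/-- `DepthGE A n` : the local ring `A` has depth at least `n`, i.e. there is a regular
sequence of length `n` contained in the maximal ideal. -/
def DepthGE (A : Type*) [CommRing A] [IsLocalRing A] (n : ℕ) : Prop :=
  ∃ rs : List A, rs.length = n ∧ (∀ r ∈ rs, r ∈ IsLocalRing.maximalIdeal A) ∧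
    RingTheory.Sequence.IsRegular A rs

/-- The height of a prime ideal. -/
noncomputable def primeHt (𝔯 : Ideal R) (h : 𝔯.IsPrime) : ℕ∞ :=
  Order.height (⟨𝔯, h⟩ : PrimeSpectrum R)

/-- Condition (G₀): the localization of `R` at every prime of height `0` is Gorenstein
(for a zero-dimensional local ring, Gorenstein means self-injective). -/
def CondG0 : Prop :=
  ∀ (𝔯 : Ideal R) (h : 𝔯.IsPrime), primeHt R 𝔯 h ≤ 0 →
    Module.Injective (Localization.AtPrime 𝔯) (Localization.AtPrime 𝔯)

/-- Serre's condition (Sₙ): `depth R_𝔯 ≥ min {n, ht 𝔯}` for every prime `𝔯`. -/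
def CondS (n : ℕ) : Prop :=
  ∀ (𝔯 : Ideal R) (h : 𝔯.IsPrime) (m : ℕ),
    (m : ℕ∞) ≤ min (n : ℕ∞) (primeHt R 𝔯 h) → DepthGE (Localization.AtPrime 𝔯) m

/-- The canonical map `I** → R** = R` for an ideal `I ⊆ R`. -/
noncomputable def bidualToRing (I : Ideal R) :
    Module.Dual R (Module.Dual R I) →ₗ[R] R where
  toFun φ := φ ((Submodule.subtype I).dualMap (LinearMap.id : R →ₗ[R] R))
  map_add' := by intros; rfl
  map_smul' := by intros; rfl
end Defs2

section AuxAss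
variable {R : Type*} [CommRing R]

private lemma myass_sub [IsNoetherianRing R] {M : Type*} [AddCommGroup M] [Module R M] (K : Submodule R M)
    {p : Ideal R} (hp : IsAssociatedPrime p M) :
    IsAssociatedPrime p K ∨ IsAssociatedPrime p (M ⧸ K) := by
  obtain ⟨hpp, x, hx⟩ := isAssociatedPrime_iff.mp hp
  have hxmem : ∀ t : R, t ∈ p ↔ t • x = 0 := by
    intro t
    rw [hx, Submodule.mem_colon_singleton, Submodule.mem_bot]
  by_cases hc : ∃ c : R, c • x ∈ K ∧ c • x ≠ 0
  · obtain ⟨c, hcK, hc0⟩ := hc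
    left
    have hcp : c ∉ p := fun hcp => hc0 ((hxmem c).mp hcp)
    refine isAssociatedPrime_iff.mpr ⟨hpp, ⟨c • x, hcK⟩, ?_⟩
    ext t
    rw [Submodule.mem_colon_singleton, Submodule.mem_bot]
    constructor
    · intro ht
      ext
      show t • (c • x) = 0
      rw [smul_comm, (hxmem t).mp ht, smul_zero]
    · intro ht
      have : t • (c • x) = 0 := congrArg Subtype.val ht
      rw [smul_smul] at this
      have : t * c ∈ p := (hxmem _).mpr (by rw [mul_smul] at this ⊢; exact this)
      rcases hpp.mem_or_mem this with h | h
      · exact h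
      · exact absurd h hcp
  · right
    push_neg at hc
    refine isAssociatedPrime_iff.mpr ⟨hpp, Submodule.Quotient.mk x, ?_⟩
    ext t
    rw [Submodule.mem_colon_singleton, Submodule.mem_bot, ← Submodule.Quotient.mk_smul,
      Submodule.Quotient.mk_eq_zero]
    constructor
    · intro ht
      rw [(hxmem t).mp ht]
      exact K.zero_mem
    · intro ht
      exact (hxmem t).mpr (hc t ht)

private lemma myassQuotFinite [IsNoetherianRing R] (N : Submodule R R) :
    (associatedPrimes R (R ⧸ N)).Finite := by
  induction N using IsNoetherian.induction with
  | hgt N IH =>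
  by_cases hN : N = ⊤
  · subst hN
    have : Subsingleton (R ⧸ (⊤ : Submodule R R)) :=
      (Submodule.Quotient.subsingleton_iff).mpr rfl
    rw [associatedPrimes.eq_empty_of_subsingleton]
    exact Set.finite_empty
  · have : Nontrivial (R ⧸ N) :=
      Submodule.Quotient.nontrivial_iff.mpr hN
    obtain ⟨p, hp⟩ := associatedPrimes.nonempty R (R ⧸ N)
    obtain ⟨hpp, x, hx⟩ := isAssociatedPrime_iff.mp hp
    obtain ⟨w, rfl⟩ := Submodule.Quotient.mk_surjective N x
    have hwN : w ∉ N := by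
      intro hw
      rw [(Submodule.Quotient.mk_eq_zero N).mpr hw] at hx
      exact hpp.ne_top (hx.trans (by ext t; simp [Submodule.mem_colon_singleton]))
    set N' : Submodule R R := N ⊔ Submodule.span R {w} with hN'def
    have hlt : N < N' := by
      refine lt_of_le_of_ne le_sup_left fun hEq => hwN ?_
      rw [hEq]
      exact Submodule.mem_sup_right (Submodule.mem_span_singleton_self w)
    have hfin' := IH N' hlt
    refine Set.Finite.subset (hfin'.insert p) ?_
    intro q hq
    rcases myass_sub (R ∙ (Submodule.Quotient.mk w : R ⧸ N)) hq with hq1 | hq2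
    · left
      set f : R →ₗ[R] (R ⧸ N) := LinearMap.toSpanSingleton R _ (Submodule.Quotient.mk w)
      have hker : LinearMap.ker f = p := by
        ext t
        rw [LinearMap.mem_ker]
        show t • (Submodule.Quotient.mk w : R ⧸ N) = 0 ↔ t ∈ p
        rw [hx, Submodule.mem_colon_singleton, Submodule.mem_bot]
      have hrange : LinearMap.range f = R ∙ (Submodule.Quotient.mk w : R ⧸ N) :=
        (LinearMap.span_singleton_eq_range R _ _).symm
      have e : (R ⧸ p) ≃ₗ[R] ↥(R ∙ (Submodule.Quotient.mk w : R ⧸ N)) :=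
        (Submodule.quotEquivOfEq p (LinearMap.ker f) hker.symm).trans
          ((f.quotKerEquivRange).trans (LinearEquiv.ofEq _ _ hrange))
      have hassq : associatedPrimes R ↥(R ∙ (Submodule.Quotient.mk w : R ⧸ N))
          = {p.radical} := by
        rw [← LinearEquiv.AssociatedPrimes.eq e,
          associatedPrimes.eq_singleton_of_isPrimary hpp.isPrimary]
      have hq1' : q ∈ associatedPrimes R ↥(R ∙ (Submodule.Quotient.mk w : R ⧸ N)) := hq1
      rw [hassq, Set.mem_singleton_iff] at hq1'
      rw [hq1', hpp.radical]
    · right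
      have hmap : (R ∙ (Submodule.Quotient.mk w : R ⧸ N))
          = Submodule.map N.mkQ (Submodule.span R {w}) := by
        rw [Submodule.map_span]
        simp only [Set.image_singleton, Submodule.mkQ_apply]
      have e2 : ((R ⧸ N) ⧸ (R ∙ (Submodule.Quotient.mk w : R ⧸ N))) ≃ₗ[R] (R ⧸ N') := by
        rw [hmap, hN'def]
        exact Submodule.quotientQuotientEquivQuotientSup N (Submodule.span R {w})
      exact (LinearEquiv.AssociatedPrimes.eq e2) ▸ hq2

private lemma myassRFinite [IsNoetherianRing R] : (associatedPrimes R R).Finite := by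
  have h := myassQuotFinite (⊥ : Submodule R R)
  have e : (R ⧸ (⊥ : Submodule R R)) ≃ₗ[R] R := Submodule.quotEquivOfEqBot ⊥ rfl
  rwa [LinearEquiv.AssociatedPrimes.eq e] at h

end AuxAss

section AuxLoc
variable {R : Type*} [CommRing R]

private lemma mem_map_loc {p : Ideal R} [p.IsPrime] {N : Ideal R} {w : R}
    (h : algebraMap R (Localization.AtPrime p) w
      ∈ N.map (algebraMap R (Localization.AtPrime p))) :
    ∃ t, t ∉ p ∧ t * w ∈ N := by
  rw [IsLocalization.mem_map_algebraMap_iff p.primeCompl] at h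
  obtain ⟨⟨⟨n, hn⟩, s⟩, hs⟩ := h
  rw [← map_mul, IsLocalization.eq_iff_exists p.primeCompl] at hs
  obtain ⟨u, hu⟩ := hs
  refine ⟨(u : R) * (s : R), p.primeCompl.mul_mem u.2 s.2, ?_⟩
  have huu : (u : R) * ((s : R) * w) = (u : R) * n := by
    rw [← hu]; ring
  rw [mul_assoc, huu]
  exact N.mul_mem_left _ hn

private lemma max_mul_mem {p : Ideal R} [p.IsPrime] {N : Ideal R} {w : R}
    (hw : ∀ t ∈ p, t * w ∈ N) :
    ∀ a ∈ IsLocalRing.maximalIdeal (Localization.AtPrime p),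
      a * algebraMap R (Localization.AtPrime p) w
        ∈ N.map (algebraMap R (Localization.AtPrime p)) := by
  intro a ha
  rw [← Localization.AtPrime.map_eq_maximalIdeal] at ha
  set A := Localization.AtPrime p
  have hK : Ideal.map (algebraMap R A) p
      ≤ (N.map (algebraMap R A)).colon (Ideal.span {algebraMap R A w}) := by
    rw [Ideal.map_le_iff_le_comap]
    intro t ht
    rw [Ideal.mem_comap, Ideal.mem_colon_span_singleton, ← map_mul]
    exact Ideal.mem_map_of_mem _ (hw t ht)
  have := hK ha
  rwa [Ideal.mem_colon_span_singleton] at this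

private lemma alg_ne_zero {p : Ideal R} [hp : p.IsPrime] {w : R}
    (hw : ∀ t, t * w = 0 → t ∈ p) :
    algebraMap R (Localization.AtPrime p) w ≠ 0 := by
  intro h
  rw [IsLocalization.map_eq_zero_iff p.primeCompl] at h
  obtain ⟨u, hu⟩ := h
  exact u.2 (hw u hu)

private lemma alg_nzd {p : Ideal R} [hp : p.IsPrime] {d : R} (hd : d ∈ nonZeroDivisors R) :
    ∀ v : Localization.AtPrime p, algebraMap R (Localization.AtPrime p) d * v = 0 → v = 0 := by
  set A := Localization.AtPrime p
  intro v hv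
  obtain ⟨⟨c, s⟩, hcs⟩ := IsLocalization.surj p.primeCompl v
  simp only at hcs
  have h1 : algebraMap R A (d * c) = 0 := by
    rw [map_mul, ← hcs, ← mul_assoc, hv, zero_mul]
  rw [IsLocalization.map_eq_zero_iff p.primeCompl] at h1
  obtain ⟨u, hu⟩ := h1
  have huu : ((u : R) * c) * d = 0 := by rw [← hu]; ring
  have hc0 : (u : R) * c = 0 := mem_nonZeroDivisors_iff_right.mp hd _ huu
  have hcz : algebraMap R A c = 0 := by
    rw [IsLocalization.map_eq_zero_iff p.primeCompl]
    exact ⟨u, hc0⟩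
  have hvs : v * algebraMap R A s = 0 := by rw [hcs, hcz]
  exact ((IsLocalization.map_units A s).mul_left_eq_zero).mp hvs

end AuxLoc

section AuxDepth
variable {A : Type*} [CommRing A] [IsLocalRing A]

private lemma depth_one (h : DepthGE A 1) :
    ∃ a, a ∈ IsLocalRing.maximalIdeal A ∧ IsSMulRegular A a := by
  obtain ⟨rs, hlen, hmem, hreg⟩ := h
  obtain ⟨a, rfl⟩ := List.length_eq_one_iff.mp hlen
  refine ⟨a, hmem a (by simp), ?_⟩
  have hw := hreg.toIsWeaklyRegular
  rw [RingTheory.Sequence.isWeaklyRegular_cons_iff] at hw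
  exact hw.1

private lemma depth_two (h : DepthGE A 2) :
    ∃ a b, a ∈ IsLocalRing.maximalIdeal A ∧ b ∈ IsLocalRing.maximalIdeal A ∧
      IsSMulRegular A a ∧ IsSMulRegular (QuotSMulTop a A) b := by
  obtain ⟨rs, hlen, hmem, hreg⟩ := h
  obtain ⟨a, b, rfl⟩ := List.length_eq_two.mp hlen
  have hw := hreg.toIsWeaklyRegular
  rw [RingTheory.Sequence.isWeaklyRegular_cons_iff] at hw
  obtain ⟨ha, hb⟩ := hw
  rw [RingTheory.Sequence.isWeaklyRegular_cons_iff] at hb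
  exact ⟨a, b, hmem a (by simp), hmem b (by simp), ha, hb.1⟩

end AuxDepth

open Pointwise in
private lemma smul_top_eq_span' {A : Type*} [CommRing A] (a : A) :
    a • (⊤ : Submodule A A) = Ideal.span {a} := by
  rw [← Submodule.ideal_span_singleton_smul, smul_eq_mul, Ideal.mul_top]

section Key
variable {R : Type*} [CommRing R] [IsNoetherianRing R]

/-- associated primes have height at most 1 (indeed 0) under (S₂). -/
private lemma assHt (hS : CondS R 2) {p : Ideal R} (hp : p.IsPrime) {w : R}
    (hw : ∀ t : R, t ∈ p ↔ t * w = 0) : primeHt R p hp ≤ 1 := by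
  by_contra h1
  have h1' : (1 : ℕ∞) ≤ primeHt R p hp := le_of_lt (not_le.mp h1)
  obtain ⟨a, ham, hareg⟩ := depth_one (hS p hp 1 (le_min (by norm_num) h1'))
  have hmul := max_mul_mem (N := (⊥ : Ideal R)) (p := p)
    (fun t ht => by rw [Ideal.mem_bot]; exact (hw t).mp ht) a ham
  rw [Ideal.map_bot, Ideal.mem_bot] at hmul
  have hne := alg_ne_zero (p := p) (fun t ht => (hw t).mpr ht)
  have : a • algebraMap R (Localization.AtPrime p) w = a • (0 : Localization.AtPrime p) := by
    rw [smul_eq_mul, hmul, smul_zero]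
  exact hne (hareg this)

private lemma exists_nzd (hS : CondS R 2) (Q : Ideal R)
    (hQ : ∀ (p : Ideal R) (hp : p.IsPrime), primeHt R p hp ≤ 1 → ¬ Q ≤ p) :
    ∃ d ∈ Q, d ∈ nonZeroDivisors R := by
  by_contra hcon
  push_neg at hcon
  have hsub : (Q : Set R) ⊆ ⋃ p ∈ associatedPrimes R R, (p : Set R) := by
    intro d hd
    rw [biUnion_associatedPrimes_eq_zero_divisors]
    have := hcon d hd
    rw [mem_nonZeroDivisors_iff_right] at this
    push_neg at this
    obtain ⟨x, hx0, hxne⟩ := this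
    exact ⟨x, hxne, by rw [smul_eq_mul, mul_comm]; exact hx0⟩
  have hfin := myassRFinite (R := R)
  have hsub' : (Q : Set R) ⊆ ⋃ p ∈ (hfin.toFinset : Set (Ideal R)), ((p : Ideal R) : Set R) := by
    intro x hx
    obtain ⟨s, ⟨q, rfl⟩, hs⟩ := hsub hx
    simp only [Set.mem_iUnion] at hs ⊢
    obtain ⟨hq, hxq⟩ := hs
    exact ⟨q, hfin.mem_toFinset.mpr hq, hxq⟩
  rw [Ideal.subset_union_prime (f := fun p : Ideal R => p) Q Q
    (fun i hi _ _ => (hfin.mem_toFinset.mp hi).isPrime)] at hsub'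
  obtain ⟨p, hpmem, hQp⟩ := hsub'
  have hpass : IsAssociatedPrime p R := hfin.mem_toFinset.mp hpmem
  obtain ⟨hpp, y, hy⟩ := isAssociatedPrime_iff.mp hpass
  have hw : ∀ t : R, t ∈ p ↔ t * y = 0 := by
    intro t
    rw [hy, Submodule.mem_colon_singleton, Submodule.mem_bot, smul_eq_mul]
  exact hQ p hpp (assHt hS hpp hw) hQp

/-- Key lemma: a functional on an ideal not contained in any height ≤ 1 prime
is multiplication by a ring element. -/
private lemma key_ext (hS : CondS R 2) (Q : Ideal R)
    (hQ : ∀ (p : Ideal R) (hp : p.IsPrime), primeHt R p hp ≤ 1 → ¬ Q ≤ p)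
    (h : Q →ₗ[R] R) : ∃ r : R, ∀ s (hs : s ∈ Q), s * r = h ⟨s, hs⟩ := by
  obtain ⟨d, hdQ, hdnzd⟩ := exists_nzd hS Q hQ
  set y := h ⟨d, hdQ⟩ with hydef
  have hsy : ∀ s (hs : s ∈ Q), s * y = d * h ⟨s, hs⟩ := by
    intro s hs
    have h1 : s * y = h (s • ⟨d, hdQ⟩) := by rw [map_smul, smul_eq_mul]
    have h2 : d * h ⟨s, hs⟩ = h (d • ⟨s, hs⟩) := by rw [map_smul, smul_eq_mul]
    rw [h1, h2]
    congr 1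
    ext
    show s • d = d • s
    rw [smul_eq_mul, smul_eq_mul, mul_comm]
  have hymem : y ∈ Ideal.span {d} := by
    by_contra hy
    -- find an associated prime of R/(d) containing ((d) : y) ⊇ Q
    have hyne : (Submodule.Quotient.mk y : R ⧸ (Ideal.span {d} : Ideal R)) ≠ 0 := by
      rw [Ne, Submodule.Quotient.mk_eq_zero]
      exact hy
    obtain ⟨P, hPass, hPle⟩ :=
      exists_le_isAssociatedPrime_of_isNoetherianRing R _ hyne
    obtain ⟨hPp, xq, hxq⟩ := isAssociatedPrime_iff.mp hPass
    obtain ⟨w, rfl⟩ := Submodule.Quotient.mk_surjective _ xq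
    have hPmem : ∀ t : R, t ∈ P ↔ t * w ∈ Ideal.span {d} := by
      intro t
      rw [hxq, Submodule.mem_colon_singleton, Submodule.mem_bot, ← Submodule.Quotient.mk_smul,
        Submodule.Quotient.mk_eq_zero, smul_eq_mul]
    have hQP : Q ≤ P := by
      intro s hs
      refine hPle ?_
      rw [Submodule.mem_colon_singleton, Submodule.mem_bot, ← Submodule.Quotient.mk_smul,
        Submodule.Quotient.mk_eq_zero, smul_eq_mul, hsy s hs]
      exact Ideal.mem_span_singleton.mpr ⟨h ⟨s, hs⟩, rfl⟩
    have hht : ¬ primeHt R P hPp ≤ 1 := fun hle => hQ P hPp hle hQP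
    have h2le : (2 : ℕ∞) ≤ primeHt R P hPp := by
      have := not_le.mp hht
      exact Order.add_one_le_of_lt this
    obtain ⟨a, b, ham, hbm, hareg, hbreg⟩ := depth_two (hS P hPp 2 (le_min le_rfl h2le))
    have hspan : (Ideal.span {d} : Ideal R).map (algebraMap R (Localization.AtPrime P))
        = Ideal.span {algebraMap R (Localization.AtPrime P) d} := by
      rw [Ideal.map_span, Set.image_singleton]
    have hznospan : algebraMap R (Localization.AtPrime P) w
        ∉ Ideal.span {algebraMap R (Localization.AtPrime P) d} := by
      rw [← hspan]
      intro hmem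
      obtain ⟨t, htP, htw⟩ := mem_map_loc hmem
      exact htP ((hPmem t).mpr htw)
    have hmz : ∀ c ∈ IsLocalRing.maximalIdeal (Localization.AtPrime P),
        c * algebraMap R (Localization.AtPrime P) w
          ∈ Ideal.span {algebraMap R (Localization.AtPrime P) d} := by
      intro c hc
      rw [← hspan]
      exact max_mul_mem (fun t ht => (hPmem t).mp ht) c hc
    have hd'reg : ∀ v : Localization.AtPrime P,
        algebraMap R (Localization.AtPrime P) d * v = 0 → v = 0 := alg_nzd hdnzd
    obtain ⟨w₁, hw1⟩ := Ideal.mem_span_singleton.mp (hmz a ham)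
    obtain ⟨w₂, hw2⟩ := Ideal.mem_span_singleton.mp (hmz b hbm)
    have hbw : b * w₁ = a * w₂ := by
      have h0 : algebraMap R (Localization.AtPrime P) d * (b * w₁ - a * w₂) = 0 := by
        linear_combination a * hw2 - b * hw1
      have := hd'reg _ h0
      exact sub_eq_zero.mp this
    have hq0 : (b : Localization.AtPrime P)
        • (Submodule.Quotient.mk w₁ : QuotSMulTop a (Localization.AtPrime P)) = 0 := by
      rw [← Submodule.Quotient.mk_smul, Submodule.Quotient.mk_eq_zero, smul_eq_mul, hbw,
        smul_top_eq_span']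
      exact Ideal.mem_span_singleton.mpr ⟨w₂, rfl⟩
    have hq0' : b • (Submodule.Quotient.mk w₁ : QuotSMulTop a (Localization.AtPrime P))
        = b • (0 : QuotSMulTop a (Localization.AtPrime P)) := by rw [hq0, smul_zero]
    have hmk0 := hbreg hq0'
    rw [Submodule.Quotient.mk_eq_zero, smul_top_eq_span', Ideal.mem_span_singleton] at hmk0
    obtain ⟨u, hu⟩ := hmk0
    have hza : a • (algebraMap R (Localization.AtPrime P) w)
        = a • (algebraMap R (Localization.AtPrime P) d * u) := by
      rw [smul_eq_mul, smul_eq_mul, hw1, hu]; ring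
    exact hznospan (Ideal.mem_span_singleton.mpr ⟨u, hareg hza⟩)
  obtain ⟨r, hr⟩ := Ideal.mem_span_singleton.mp hymem
  refine ⟨r, fun s hs => ?_⟩
  have : d * (s * r) = d * h ⟨s, hs⟩ := by
    rw [← hsy s hs, hr]; ring
  exact (mul_cancel_left_mem_nonZeroDivisors hdnzd).mp this

end Key

section Chi
variable {R : Type*} [CommRing R] [IsNoetherianRing R]

private def QIdeal (J : Ideal R) (x : R) : Ideal R where
  carrier := {s : R | s * x ∈ J}
  add_mem' := by
    intro s t hs ht
    simp only [Set.mem_setOf_eq, add_mul] at *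
    exact J.add_mem hs ht
  zero_mem' := by simp only [Set.mem_setOf_eq, zero_mul]; exact J.zero_mem
  smul_mem' := by
    intro c s hs
    simp only [Set.mem_setOf_eq, smul_eq_mul, mul_assoc] at *
    exact J.mul_mem_left c hs

private lemma mem_QIdeal {J : Ideal R} {x s : R} : s ∈ QIdeal J x ↔ s * x ∈ J := Iff.rfl

private def linQ (J : Ideal R) (x : R) (f : Module.Dual R J) : (QIdeal J x) →ₗ[R] R where
  toFun := fun s => f ⟨(s : R) * x, s.2⟩
  map_add' := by
    intro s t
    rw [← map_add]
    exact congrArg f (Subtype.ext (by simp [add_mul]))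
  map_smul' := by
    intro c s
    simp only [RingHom.id_apply]
    rw [← map_smul]
    exact congrArg f (Subtype.ext (by simp [mul_assoc]))

private lemma cancelQ (hS : CondS R 2) (Q : Ideal R)
    (hQ : ∀ (p : Ideal R) (hp : p.IsPrime), primeHt R p hp ≤ 1 → ¬ Q ≤ p)
    {r r' : R} (hrr : ∀ s ∈ Q, s * r = s * r') : r = r' := by
  obtain ⟨d, hdQ, hdnzd⟩ := exists_nzd hS Q hQ
  refine (mul_cancel_left_mem_nonZeroDivisors hdnzd).mp ?_
  exact hrr d hdQ

private lemma htHyp_inf {Q Q' : Ideal R}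
    (hQ : ∀ (p : Ideal R) (hp : p.IsPrime), primeHt R p hp ≤ 1 → ¬ Q ≤ p)
    (hQ' : ∀ (p : Ideal R) (hp : p.IsPrime), primeHt R p hp ≤ 1 → ¬ Q' ≤ p) :
    ∀ (p : Ideal R) (hp : p.IsPrime), primeHt R p hp ≤ 1 → ¬ (Q ⊓ Q') ≤ p := by
  intro p hp hle hcon
  obtain ⟨s, hsQ, hsp⟩ := SetLike.not_le_iff_exists.mp (hQ p hp hle)
  obtain ⟨t, htQ, htp⟩ := SetLike.not_le_iff_exists.mp (hQ' p hp hle)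
  have hst : s * t ∈ Q ⊓ Q' := ⟨Q.mul_mem_right t hsQ, Q'.mul_mem_left s htQ⟩
  rcases hp.mem_or_mem (hcon hst) with hc | hc
  · exact hsp hc
  · exact htp hc

variable (hS : CondS R 2) {I J : Ideal R}
  (hQ : ∀ x : I, ∀ (p : Ideal R) (hp : p.IsPrime), primeHt R p hp ≤ 1
    → ¬ QIdeal J ((x : R)) ≤ p)

private noncomputable def ExtD (f : Module.Dual R J) (x : I) : R :=
  Classical.choose (key_ext hS (QIdeal J (x : R)) (hQ x) (linQ J (x : R) f))

private lemma ExtD_spec (f : Module.Dual R J) (x : I) :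
    ∀ s (hs : s ∈ QIdeal J (x : R)), s * ExtD hS hQ f x = f ⟨s * (x : R), hs⟩ :=
  Classical.choose_spec (key_ext hS (QIdeal J (x : R)) (hQ x) (linQ J (x : R) f))

private lemma ExtD_eq (f : Module.Dual R J) (x : I) (r' : R)
    (h' : ∀ s (hs : s ∈ QIdeal J (x : R)), s * r' = f ⟨s * (x : R), hs⟩) :
    ExtD hS hQ f x = r' := by
  refine cancelQ hS (QIdeal J (x : R)) (hQ x) (fun s hs => ?_)
  rw [ExtD_spec hS hQ f x s hs, h' s hs]

private lemma ExtD_add (f : Module.Dual R J) (x y : I) :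
    ExtD hS hQ f (x + y) = ExtD hS hQ f x + ExtD hS hQ f y := by
  refine cancelQ hS (QIdeal J (x : R) ⊓ QIdeal J (y : R))
    (htHyp_inf (hQ x) (hQ y)) (fun s hs => ?_)
  obtain ⟨hsx, hsy⟩ := hs
  have hsxy : s ∈ QIdeal J ((↑(x + y) : R)) := by
    rw [mem_QIdeal, Submodule.coe_add, mul_add]
    exact J.add_mem hsx hsy
  rw [ExtD_spec hS hQ f (x + y) s hsxy, mul_add,
    ExtD_spec hS hQ f x s hsx, ExtD_spec hS hQ f y s hsy, ← map_add]
  congr 1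
  apply Subtype.ext
  show s * ((x + y : I) : R) = s * (x : R) + s * (y : R)
  simp [mul_add]

private lemma ExtD_smul (f : Module.Dual R J) (c : R) (x : I) :
    ExtD hS hQ f (c • x) = c * ExtD hS hQ f x := by
  refine cancelQ hS (QIdeal J (x : R)) (hQ x) (fun s hs => ?_)
  have hscx : s ∈ QIdeal J ((↑(c • x) : R)) := by
    rw [mem_QIdeal, Submodule.coe_smul, smul_eq_mul, mul_comm c, ← mul_assoc]
    exact J.mul_mem_right c hs
  rw [ExtD_spec hS hQ f (c • x) s hscx]
  have : s * (c * ExtD hS hQ f x) = c * (s * ExtD hS hQ f x) := by ring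
  rw [this, ExtD_spec hS hQ f x s hs, ← smul_eq_mul (a := c), ← map_smul]
  congr 1
  apply Subtype.ext
  show s * ((c • x : I) : R) = c • (s * (x : R))
  simp only [Submodule.coe_smul, smul_eq_mul]
  ring

private lemma ExtD_fadd (f g : Module.Dual R J) (x : I) :
    ExtD hS hQ (f + g) x = ExtD hS hQ f x + ExtD hS hQ g x := by
  refine cancelQ hS (QIdeal J (x : R)) (hQ x) (fun s hs => ?_)
  rw [ExtD_spec hS hQ (f + g) x s hs, mul_add, ExtD_spec hS hQ f x s hs,
    ExtD_spec hS hQ g x s hs]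
  rfl

private lemma ExtD_fsmul (c : R) (f : Module.Dual R J) (x : I) :
    ExtD hS hQ (c • f) x = c * ExtD hS hQ f x := by
  refine cancelQ hS (QIdeal J (x : R)) (hQ x) (fun s hs => ?_)
  rw [ExtD_spec hS hQ (c • f) x s hs]
  have : s * (c * ExtD hS hQ f x) = c * (s * ExtD hS hQ f x) := by ring
  rw [this, ExtD_spec hS hQ f x s hs]
  rfl

private noncomputable def chi : Module.Dual R J →ₗ[R] Module.Dual R I where
  toFun := fun f =>
    { toFun := fun x => ExtD hS hQ f x
      map_add' := fun x y => ExtD_add hS hQ f x y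
      map_smul' := fun c x => ExtD_smul hS hQ f c x }
  map_add' := fun f g => by
    apply LinearMap.ext
    intro x
    exact ExtD_fadd hS hQ f g x
  map_smul' := fun c f => by
    apply LinearMap.ext
    intro x
    exact ExtD_fsmul hS hQ c f x

private lemma chi_subtype :
    chi hS hQ ((Submodule.subtype J).dualMap (LinearMap.id : R →ₗ[R] R))
      = (Submodule.subtype I).dualMap (LinearMap.id : R →ₗ[R] R) := by
  apply LinearMap.ext
  intro x
  show ExtD hS hQ _ x = (x : R)
  exact ExtD_eq hS hQ _ x (x : R) (fun s hs => rfl)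

end Chi

theorem bidual_mono' (R : Type*) [CommRing R] [IsNoetherianRing R]
    (hS : CondS R 2) (I J : Ideal R)
    (h : ∀ (𝔯 : Ideal R) (h𝔯 : 𝔯.IsPrime), primeHt R 𝔯 h𝔯 ≤ 1 →
      I.map (algebraMap R (Localization.AtPrime 𝔯))
        ≤ J.map (algebraMap R (Localization.AtPrime 𝔯))) :
    LinearMap.range (bidualToRing R I) ≤ LinearMap.range (bidualToRing R J) := by
  rintro r ⟨φ, rfl⟩
  have hQ : ∀ x : I, ∀ (p : Ideal R) (hp : p.IsPrime), primeHt R p hp ≤ 1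
      → ¬ QIdeal J ((x : R)) ≤ p := by
    intro x p hp hle hcon
    have hx : algebraMap R (Localization.AtPrime p) (x : R)
        ∈ J.map (algebraMap R (Localization.AtPrime p)) :=
      h p hp hle (Ideal.mem_map_of_mem _ x.2)
    obtain ⟨t, htp, htx⟩ := mem_map_loc hx
    exact htp (hcon htx)
  refine ⟨φ.comp (chi hS hQ), ?_⟩
  show φ (chi hS hQ ((Submodule.subtype J).dualMap (LinearMap.id : R →ₗ[R] R)))
    = φ ((Submodule.subtype I).dualMap (LinearMap.id : R →ₗ[R] R))
  rw [chi_subtype]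

/-- If a noetherian ring satisfies (G₀) and (S₂) and `I, J` are ideals with
`I·R_𝔯 ⊆ J·R_𝔯` for all primes `𝔯` of height at most `1`, then `I** ⊆ J**`
(as ideals of `R` under the canonical identification). -/
theorem bidual_mono (R : Type*) [CommRing R] [IsNoetherianRing R]
    (hG : CondG0 R) (hS : CondS R 2) (I J : Ideal R)
    (h : ∀ (𝔯 : Ideal R) (h𝔯 : 𝔯.IsPrime), primeHt R 𝔯 h𝔯 ≤ 1 →
      I.map (algebraMap R (Localization.AtPrime 𝔯))
        ≤ J.map (algebraMap R (Localization.AtPrime 𝔯))) :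
    LinearMap.range (bidualToRing R I) ≤ LinearMap.range (bidualToRing R J) := by
  exact bidual_mono' R hS I J h
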